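/- Let X be a finite T0 space, Y a topological space, and F : X → P(Y) a strongly upper semicontinuous multivalued map with nonempty values. View F as the subspace {(x,y) ∈ X × Y : y ∈ F(x)} of X × Y, and let p₁ : F → X be the first-coordinate projection. Then for each x ∈ X, the fiber preimage p₁⁻¹(U_x) is homotopy equivalent to the subspace F(x) ⊆ Y, where U_x is the smallest open set containing x. -/

import Mathlib

/-- The specialization order: `spec x y` iff `x` belongs to every open set containing `y`. -/
def spec {X : Type*} [TopologicalSpace X] (x y : X) : Prop :=
  ∀ U : Set X, IsOpen U → y ∈ U → x ∈ U

/-- For a strongly upper semicontinuous multivalued map `F : X ⊸ Y` with nonempty values,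
`X` finite `T0`, the preimage `p₁⁻¹(U_x)` of the minimal open neighborhood of `x` under
the first projection from the graph of `F` is homotopy equivalent to `F x`. Here
`p₁⁻¹(U_x) = {(z, y) : z ≤ x, y ∈ F z}` with the subspace topology of `X × Y`. -/
theorem stmt16 {X Y : Type*} [TopologicalSpace X] [Finite X] [T0Space X]
    [TopologicalSpace Y] (F : X → Set Y)
    (hsusc : ∀ B : Set Y, IsOpen {x | F x ⊆ B})
    (hne : ∀ x, (F x).Nonempty) (x : X) :
    Nonempty
      (ContinuousMap.HomotopyEquiv (F x) {p : X × Y // spec p.1 x ∧ p.2 ∈ F p.1}) := by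
  classical
  have hsub : ∀ z : X, spec z x → F z ⊆ F x := fun z hz =>
    hz {w | F w ⊆ F x} (hsusc (F x)) (fun y hy => hy)
  let i : C(F x, {p : X × Y // spec p.1 x ∧ p.2 ∈ F p.1}) :=
    ⟨fun y => ⟨(x, y.1), fun U _ hx => hx, y.2⟩,
      (continuous_const.prodMk continuous_subtype_val).subtype_mk _⟩
  let r : C({p : X × Y // spec p.1 x ∧ p.2 ∈ F p.1}, F x) :=
    ⟨fun p => ⟨p.1.2, hsub p.1.1 p.2.1 p.2.2⟩,
      (continuous_snd.comp continuous_subtype_val).subtype_mk _⟩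
  have hri : r.comp i = ContinuousMap.id (F x) := by
    ext y
    rfl
  let h : unitInterval × {p : X × Y // spec p.1 x ∧ p.2 ∈ F p.1} → X × Y :=
    fun q => if q.1 = 1 then (x, q.2.1.2) else q.2.1
  have hmem : ∀ q, h q ∈ {p : X × Y | spec p.1 x ∧ p.2 ∈ F p.1} := by
    rintro ⟨t, p⟩
    by_cases ht : t = 1
    · simp only [h, if_pos ht]
      exact ⟨fun U _ hx => hx, hsub p.1.1 p.2.1 p.2.2⟩
    · simp only [h, if_neg ht]
      exact p.2
  have hcont : Continuous h := by
    rw [continuous_def]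
    intro W hW
    rw [isOpen_iff_forall_mem_open]
    rintro ⟨t, p⟩ hq
    by_cases ht : t = 1
    · subst ht
      simp only [Set.mem_preimage, h, if_pos rfl] at hq
      obtain ⟨U, V, hU, hV, hxU, hyV, hUV⟩ := isOpen_prod_iff.mp hW x p.1.2 hq
      refine ⟨Set.univ ×ˢ {q : {p : X × Y // spec p.1 x ∧ p.2 ∈ F p.1} | q.1 ∈ U ×ˢ V},
        ?_, ?_, ?_⟩
      · rintro ⟨s, q⟩ ⟨-, hqUV⟩
        simp only [Set.mem_preimage, h]
        by_cases hs : s = 1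
        · rw [if_pos hs]; exact hUV ⟨hxU, hqUV.2⟩
        · rw [if_neg hs]; exact hUV hqUV
      · exact IsOpen.prod isOpen_univ ((hU.prod hV).preimage continuous_subtype_val)
      · exact ⟨trivial, p.2.1 U hU hxU, hyV⟩
    · refine ⟨{s : unitInterval | s ≠ 1} ×ˢ
        {q : {p : X × Y // spec p.1 x ∧ p.2 ∈ F p.1} | q.1 ∈ W}, ?_, ?_, ?_⟩
      · rintro ⟨s, q⟩ ⟨hs, hqW⟩
        simpa only [Set.mem_preimage, Set.mem_setOf_eq, h, if_neg hs] using hqW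
      · exact IsOpen.prod isOpen_compl_singleton (hW.preimage continuous_subtype_val)
      · refine ⟨ht, ?_⟩
        simpa only [Set.mem_preimage, Set.mem_setOf_eq, h, if_neg ht] using hq
  let Hmap : C(unitInterval × {p : X × Y // spec p.1 x ∧ p.2 ∈ F p.1},
      {p : X × Y // spec p.1 x ∧ p.2 ∈ F p.1}) :=
    ⟨fun q => ⟨h q, hmem q⟩, hcont.subtype_mk _⟩
  let H : ContinuousMap.Homotopy
      (ContinuousMap.id {p : X × Y // spec p.1 x ∧ p.2 ∈ F p.1}) (i.comp r) :=
    { toContinuousMap := Hmap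
      map_zero_left := fun p => by
        apply Subtype.ext
        simp [Hmap, h]
      map_one_left := fun p => by
        apply Subtype.ext
        simp [Hmap, h, i, r] }
  exact ⟨⟨i, r, hri ▸ ContinuousMap.Homotopic.refl _, ⟨H.symm⟩⟩⟩
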